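/- Let n ≥ 3 and let k ≥ 2 be an integer, with λ_k = k(k+n−2). If ψ : (0,∞) → ℝ is a C² function with ∫₀^∞ (ψ(r)² + ψ′(r)²) dr < ∞ that satisfies −ψ″(r) − ((n−1)/r)ψ′(r) + (r² + λ_k/r² − n − 2)ψ(r) = 0 for all r > 0, then ψ is identically zero. -/

import Mathlib

open MeasureTheory Real Filter Set Topology

lemma exists_small_near_zero (f : ℝ → ℝ) (hf : IntegrableOn f (Ioi (0:ℝ)))
    (hc : ContinuousOn f (Ioi (0:ℝ))) (h0 : ∀ r ∈ Ioi (0:ℝ), 0 ≤ f r)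
    (ε T : ℝ) (hε : 0 < ε) (hT : 0 < T) : ∃ r, 0 < r ∧ r < T ∧ r * f r < ε := by
  by_contra hcon
  push_neg at hcon
  set I := ∫ r in Ioi (0:ℝ), f r with hI
  have hI0 : 0 ≤ I := setIntegral_nonneg measurableSet_Ioi h0
  have key : ∀ t, 0 < t → t < T/2 → ε * Real.log ((T/2)/t) ≤ I := by
    intro t ht htT
    have hle : t ≤ T/2 := le_of_lt htT
    have hsub : Ioc t (T/2) ⊆ Ioi (0:ℝ) := fun x hx => lt_trans ht hx.1
    have hfi : IntervalIntegrable f volume t (T/2) := by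
      rw [intervalIntegrable_iff_integrableOn_Ioc_of_le hle]
      exact hf.mono_set hsub
    have hgi : IntervalIntegrable (fun r => ε * (1/r)) volume t (T/2) := by
      apply ContinuousOn.intervalIntegrable
      apply ContinuousOn.mul continuousOn_const
      apply ContinuousOn.div continuousOn_const continuousOn_id
      intro x hx
      rw [uIcc_of_le hle] at hx
      exact ne_of_gt (lt_of_lt_of_le ht hx.1)
    have hmono : ∫ r in t..(T/2), ε * (1/r) ≤ ∫ r in t..(T/2), f r := by
      apply intervalIntegral.integral_mono_on hle hgi hfi
      intro x hx
      have hx0 : 0 < x := lt_of_lt_of_le ht hx.1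
      have hxT : x < T := lt_of_le_of_lt hx.2 (by linarith)
      have := hcon x hx0 hxT
      rw [mul_one_div, div_le_iff₀ hx0, mul_comm]
      exact this
    have hlhs : ∫ r in t..(T/2), ε * (1/r) = ε * Real.log ((T/2)/t) := by
      rw [intervalIntegral.integral_const_mul, integral_one_div]
      intro hx
      rw [uIcc_of_le hle] at hx
      exact absurd hx.1 (not_le.mpr ht)
    have hrhs : ∫ r in t..(T/2), f r ≤ I := by
      rw [intervalIntegral.integral_of_le hle, hI]
      apply setIntegral_mono_set hf
      · filter_upwards [ae_restrict_mem measurableSet_Ioi] with x hx using h0 x hx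
      · exact HasSubset.Subset.eventuallyLE hsub
    linarith [hlhs ▸ hmono]
  set t := (T/2) * Real.exp (-(I+1)/ε) with htdef
  have ht0 : 0 < t := mul_pos (by linarith) (Real.exp_pos _)
  have htT : t < T/2 := by
    have : Real.exp (-(I+1)/ε) < 1 := by
      rw [Real.exp_lt_one_iff]
      apply div_neg_of_neg_of_pos (by linarith) hε
    nlinarith
  have := key t ht0 htT
  rw [htdef] at this
  have hTe : (T/2) / ((T/2) * Real.exp (-(I+1)/ε)) = Real.exp ((I+1)/ε) := by
    rw [div_mul_eq_div_div, div_self (by linarith : (T/2) ≠ 0), one_div, ← Real.exp_neg, neg_div, neg_neg]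
  rw [hTe, Real.log_exp] at this
  rw [mul_div_cancel₀ _ (ne_of_gt hε)] at this
  linarith

lemma exists_small_at_top (f : ℝ → ℝ) (hf : IntegrableOn f (Ioi (0:ℝ)))
    (hc : ContinuousOn f (Ioi (0:ℝ))) (h0 : ∀ r ∈ Ioi (0:ℝ), 0 ≤ f r)
    (ε T : ℝ) (hε : 0 < ε) (hT : 0 < T) : ∃ r, T < r ∧ r * f r < ε := by
  by_contra hcon
  push_neg at hcon
  set I := ∫ r in Ioi (0:ℝ), f r with hI
  have hI0 : 0 ≤ I := setIntegral_nonneg measurableSet_Ioi h0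
  have key : ∀ S, T+1 < S → ε * Real.log (S/(T+1)) ≤ I := by
    intro S hS
    have hle : T+1 ≤ S := le_of_lt hS
    have hsub : Ioc (T+1) S ⊆ Ioi (0:ℝ) := fun x hx => by
      simp only [mem_Ioi]; have := hx.1; linarith
    have hfi : IntervalIntegrable f volume (T+1) S := by
      rw [intervalIntegrable_iff_integrableOn_Ioc_of_le hle]
      exact hf.mono_set hsub
    have hgi : IntervalIntegrable (fun r => ε * (1/r)) volume (T+1) S := by
      apply ContinuousOn.intervalIntegrable
      apply ContinuousOn.mul continuousOn_const
      apply ContinuousOn.div continuousOn_const continuousOn_id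
      intro x hx
      rw [uIcc_of_le hle] at hx
      have := hx.1
      simp only [id]
      intro h; rw [h] at this; linarith
    have hmono : ∫ r in (T+1)..S, ε * (1/r) ≤ ∫ r in (T+1)..S, f r := by
      apply intervalIntegral.integral_mono_on hle hgi hfi
      intro x hx
      have hx0 : 0 < x := by have := hx.1; linarith
      have hxT : T < x := by have := hx.1; linarith
      have := hcon x hxT
      rw [mul_one_div, div_le_iff₀ hx0, mul_comm]
      exact this
    have hlhs : ∫ r in (T+1)..S, ε * (1/r) = ε * Real.log (S/(T+1)) := by
      rw [intervalIntegral.integral_const_mul, integral_one_div]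
      intro hx
      rw [uIcc_of_le hle] at hx
      have := hx.1; linarith
    have hrhs : ∫ r in (T+1)..S, f r ≤ I := by
      rw [intervalIntegral.integral_of_le hle, hI]
      apply setIntegral_mono_set hf
      · filter_upwards [ae_restrict_mem measurableSet_Ioi] with x hx using h0 x hx
      · exact HasSubset.Subset.eventuallyLE hsub
    linarith [hlhs ▸ hmono]
  set S := (T+1) * Real.exp ((I+1)/ε) with hSdef
  have hS1 : T+1 < S := by
    have h1 : 1 < Real.exp ((I+1)/ε) := by
      have : (0:ℝ) < (I+1)/ε := by positivity
      calc (1:ℝ) = Real.exp 0 := (Real.exp_zero).symm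
        _ < _ := Real.exp_lt_exp.mpr this
    nlinarith
  have := key S hS1
  have hTe : S / (T+1) = Real.exp ((I+1)/ε) := by
    rw [hSdef, mul_comm, mul_div_assoc, div_self (by linarith : (T+1:ℝ) ≠ 0), mul_one]
  rw [hTe, Real.log_exp, mul_div_cancel₀ _ (ne_of_gt hε)] at this
  linarith

lemma expDeriv (M s : ℝ) : HasDerivAt (fun s : ℝ => M * Real.exp (-s)) (-(M * Real.exp (-s))) s := by
  have h := ((Real.hasDerivAt_exp (-s)).comp s (hasDerivAt_neg s)).const_mul M
  exact h.congr_deriv (by ring)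

lemma psi_le_exp (L : ℝ) (hL : 0 ≤ L) (m : ℕ) (ψ ψ' : ℝ → ℝ)
    (hd1 : ∀ r ∈ Ioi (0:ℝ), HasDerivAt ψ (ψ' r) r)
    (hd2 : ∀ r ∈ Ioi (0:ℝ), HasDerivAt ψ'
      (-(((m:ℝ)+2)/r) * ψ' r + (r^2 + L/r^2 - ((m:ℝ)+5)) * ψ r) r)
    (hlim : Tendsto ψ atTop (𝓝 (0:ℝ)))
    (M : ℝ) (hM : 0 ≤ M) (hψR : ψ ((m:ℝ)+5) ≤ M * Real.exp (-((m:ℝ)+5))) :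
    ∀ r, (m:ℝ)+5 ≤ r → ψ r ≤ M * Real.exp (-r) := by
  have hm0 : (0:ℝ) ≤ (m:ℝ) := Nat.cast_nonneg m
  have hR0 : (0:ℝ) < (m:ℝ)+5 := by linarith
  set u : ℝ → ℝ := fun s => ψ s - M * Real.exp (-s) with hudef
  have hu_der : ∀ s ∈ Ioi (0:ℝ), HasDerivAt u (ψ' s + M * Real.exp (-s)) s := by
    intro s hs
    have := (hd1 s hs).sub (expDeriv M s)
    exact this.congr_deriv (by ring)
  have hu_cont : ∀ s ∈ Ioi (0:ℝ), ContinuousAt u s := fun s hs => (hu_der s hs).continuousAt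
  have hu_lim : Tendsto u atTop (𝓝 (0:ℝ)) := by
    have h2 : Tendsto (fun s : ℝ => M * Real.exp (-s)) atTop (𝓝 (M * 0)) :=
      tendsto_exp_neg_atTop_nhds_zero.const_mul M
    rw [mul_zero] at h2
    simpa using hlim.sub h2
  intro r hr
  by_contra hgt
  push_neg at hgt
  have hur : 0 < u r := by simp only [hudef]; linarith
  have huR : u ((m:ℝ)+5) ≤ 0 := by simp only [hudef]; linarith
  have hrR : (m:ℝ)+5 < r := by
    rcases lt_or_eq_of_le hr with h | h
    · exact h
    · exfalso; rw [← h] at hur; linarith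
  obtain ⟨T, hT⟩ := eventually_atTop.mp (hu_lim.eventually_lt_const hur)
  set T' : ℝ := max T r with hT'def
  have hrT' : r ≤ T' := le_max_right _ _
  have hRT' : (m:ℝ)+5 ≤ T' := le_trans (le_of_lt hrR) hrT'
  have hcont : ContinuousOn u (Icc ((m:ℝ)+5) T') := fun x hx =>
    (hu_cont x (lt_of_lt_of_le hR0 hx.1)).continuousWithinAt
  obtain ⟨c, hcmem, hcmax⟩ :=
    isCompact_Icc.exists_isMaxOn (nonempty_Icc.mpr hRT') hcont
  have hurc : u r ≤ u c := hcmax ⟨hr, hrT'⟩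
  have huc : 0 < u c := lt_of_lt_of_le hur hurc
  have hcR : (m:ℝ)+5 < c := by
    rcases lt_or_eq_of_le hcmem.1 with h | h
    · exact h
    · exfalso; rw [← h] at huc; linarith
  have hcT' : c < T' := by
    rcases lt_or_eq_of_le hcmem.2 with h | h
    · exact h
    · exfalso
      have : u T' < u r := hT T' (le_max_left _ _)
      rw [← h] at this; linarith
  have hc0 : 0 < c := lt_trans hR0 hcR
  have hloc : IsLocalMax u c := hcmax.isLocalMax (Icc_mem_nhds hcR hcT')
  have hu1c : ψ' c + M * Real.exp (-c) = 0 :=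
    hloc.hasDerivAt_eq_zero (hu_der c hc0)
  set E : ℝ := M * Real.exp (-c) with hEdef
  have hE0 : 0 ≤ E := by positivity
  have hψ'c : ψ' c = -E := by linarith
  have hψc : ψ c = u c + E := by simp only [hudef]; ring
  set D : ℝ := -(((m:ℝ)+2)/c) * ψ' c + (c^2 + L/c^2 - ((m:ℝ)+5)) * ψ c - E with hDdef
  have hu1_der : HasDerivAt (fun s => ψ' s + M * Real.exp (-s)) D c := by
    have h := (hd2 c hc0).add (expDeriv M c)
    have heq : D = -(((m:ℝ)+2)/c) * ψ' c + (c^2 + L/c^2 - ((m:ℝ)+5)) * ψ c + -(M * Real.exp (-c)) := by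
      rw [hDdef]; ring
    rw [heq]; exact h
  have hV : 2 ≤ c^2 + L/c^2 - ((m:ℝ)+5) := by
    have h1 : ((m:ℝ)+5)^2 ≤ c^2 := by nlinarith
    have h2 : 0 ≤ L/c^2 := by positivity
    nlinarith
  have hD0 : 0 < D := by
    rw [hDdef, hψ'c, hψc]
    have hVpsi : 2 * (u c + E) ≤ (c^2 + L/c^2 - ((m:ℝ)+5)) * (u c + E) :=
      mul_le_mul_of_nonneg_right hV (by linarith)
    have hfE : 0 ≤ ((m:ℝ)+2)/c * E := by positivity
    nlinarith
  have hslope := hasDerivAt_iff_tendsto_slope.mp hu1_der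
  have hev : ∀ᶠ x in 𝓝[≠] c, 0 < slope (fun s => ψ' s + M * Real.exp (-s)) c x :=
    hslope.eventually_const_lt hD0
  have hev' : ∀ᶠ x in 𝓝[>] c, 0 < slope (fun s => ψ' s + M * Real.exp (-s)) c x :=
    hev.filter_mono (nhdsWithin_mono c (fun x hx => ne_of_gt hx))
  obtain ⟨b, hb, hbsub⟩ := mem_nhdsGT_iff_exists_Ioo_subset.mp hev'
  have hu1pos : ∀ x ∈ Ioo c b, 0 < ψ' x + M * Real.exp (-x) := by
    intro x hx
    have hsx := hbsub hx
    simp only [mem_setOf_eq, slope_def_field] at hsx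
    have hxc : 0 < x - c := by linarith [hx.1]
    have h9 := mul_pos hsx hxc
    rw [div_mul_cancel₀] at h9
    · linarith
    · exact ne_of_gt hxc
  set d : ℝ := min ((c+b)/2) T' with hddef
  have hcd : c < d := lt_min (by have := mem_Ioi.mp hb; linarith) hcT'
  have hdT' : d ≤ T' := min_le_right _ _
  have hdb : d < b := lt_of_le_of_lt (min_le_left _ _) (by have := mem_Ioi.mp hb; linarith)
  have hmono : StrictMonoOn u (Icc c d) := by
    apply strictMonoOn_of_deriv_pos (convex_Icc c d)
    · intro x hx
      exact (hu_cont x (lt_of_lt_of_le hc0 hx.1)).continuousWithinAt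
    · intro x hx
      rw [interior_Icc] at hx
      have hx0 : 0 < x := lt_trans hc0 hx.1
      rw [(hu_der x hx0).deriv]
      exact hu1pos x ⟨hx.1, lt_trans hx.2 hdb⟩
  have h10 : u c < u d := hmono ⟨le_refl c, le_of_lt hcd⟩ ⟨le_of_lt hcd, le_refl d⟩ hcd
  have h11 : u d ≤ u c := hcmax ⟨le_trans (le_of_lt hcR) (le_of_lt hcd), hdT'⟩
  linarith
open MeasureTheory Real Filter Set Topology

lemma Bderiv (m j : ℕ) (ψ ψ' : ℝ → ℝ) (r : ℝ) (hr : 0 < r)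
    (h1 : HasDerivAt ψ (ψ' r) r)
    (h2 : HasDerivAt ψ' (-(((m:ℝ)+2)/r) * ψ' r
      + (r^2 + (((j:ℝ)+2)*((j:ℝ)+(m:ℝ)+3))/r^2 - ((m:ℝ)+5)) * ψ r) r) :
    HasDerivAt (fun s => s^(m+2) * ψ s * ψ' s - (((j:ℝ)+2) * s^(m+1) - s^(m+3)) * ψ s^2)
      (r^(m+2) * ((ψ' r - (((j:ℝ)+2)/r - r) * ψ r)^2 + (2*(j:ℝ)+2) * ψ r^2)) r := by
  have hp2 : HasDerivAt (fun s : ℝ => s^(m+2)) (((m:ℝ)+2)*r^(m+1)) r := by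
    have := hasDerivAt_pow (m+2) r
    refine this.congr_deriv ?_
    rw [show m+2-1 = m+1 by omega]
    push_cast; ring
  have hp1 : HasDerivAt (fun s : ℝ => ((j:ℝ)+2) * s^(m+1) - s^(m+3))
      (((j:ℝ)+2) * (((m:ℝ)+1)*r^m) - ((m:ℝ)+3)*r^(m+2)) r := by
    have ha := (hasDerivAt_pow (m+1) r).const_mul ((j:ℝ)+2)
    have hb := hasDerivAt_pow (m+3) r
    simp only [Nat.add_sub_cancel] at ha hb
    have := ha.sub hb
    refine this.congr_deriv ?_
    push_cast; ring
  have hsq : HasDerivAt (fun s => ψ s^2) (2 * ψ r * ψ' r) r := by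
    have := h1.pow 2
    refine this.congr_deriv ?_
    push_cast; ring
  have e1 := (hp2.mul h1).mul h2
  have e2 := hp1.mul hsq
  have := e1.sub e2
  refine this.congr_deriv ?_
  have hrne : r ≠ 0 := ne_of_gt hr
  simp only [Pi.mul_apply]
  field_simp
  ring

set_option maxHeartbeats 1000000 in
/-- Claim 3 in the proof of nondegeneracy: for `k ≥ 2` (`λ_k = k(k+n−2)`), the equation
`−ψ″ − ((n−1)/r)ψ′ + (r² + λ_k/r² − n − 2)ψ = 0` has only the trivial solution
in `H¹(ℝ₊)`. -/
theorem radial_mode_higher_trivial (n k : ℕ) (hn : 3 ≤ n) (hk : 2 ≤ k)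
    (ψ ψ' ψ'' : ℝ → ℝ)
    (hd1 : ∀ r ∈ Ioi (0 : ℝ), HasDerivAt ψ (ψ' r) r)
    (hd2 : ∀ r ∈ Ioi (0 : ℝ), HasDerivAt ψ' (ψ'' r) r)
    (hc2 : ContinuousOn ψ'' (Ioi (0 : ℝ)))
    (hint : IntegrableOn (fun r => (ψ r) ^ 2 + (ψ' r) ^ 2) (Ioi (0 : ℝ)))
    (hode : ∀ r ∈ Ioi (0 : ℝ),
      -(ψ'' r) - ((n - 1) / r) * ψ' r
        + (r ^ 2 + (k * (k + n - 2) : ℝ) / r ^ 2 - n - 2) * ψ r = 0) :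
    ∀ r ∈ Ioi (0 : ℝ), ψ r = 0 := by
  obtain ⟨m, rfl⟩ : ∃ m, n = m + 3 := ⟨n - 3, by omega⟩
  obtain ⟨j, rfl⟩ : ∃ j, k = j + 2 := ⟨k - 2, by omega⟩
  clear hn hk hc2
  have hL0 : (0:ℝ) ≤ ((j:ℝ)+2)*((j:ℝ)+(m:ℝ)+3) := by positivity
  have hode' : ∀ r ∈ Ioi (0:ℝ), ψ'' r = -(((m:ℝ)+2)/r) * ψ' r
      + (r^2 + (((j:ℝ)+2)*((j:ℝ)+(m:ℝ)+3))/r^2 - ((m:ℝ)+5)) * ψ r := by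
    intro r hr
    have h := hode r hr
    push_cast at h
    ring_nf at h ⊢
    linarith
  have hd2' : ∀ r ∈ Ioi (0:ℝ), HasDerivAt ψ' (-(((m:ℝ)+2)/r) * ψ' r
      + (r^2 + (((j:ℝ)+2)*((j:ℝ)+(m:ℝ)+3))/r^2 - ((m:ℝ)+5)) * ψ r) r := by
    intro r hr
    have h := hd2 r hr
    rw [hode' r hr] at h
    exact h
  have hψcont : ContinuousOn ψ (Ioi 0) := fun x hx => ((hd1 x hx).continuousAt).continuousWithinAt
  have hψ'cont : ContinuousOn ψ' (Ioi 0) := fun x hx => ((hd2 x hx).continuousAt).continuousWithinAt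
  set f : ℝ → ℝ := fun r => ψ r^2 + ψ' r^2 with hfdef
  have hfc : ContinuousOn f (Ioi 0) := (hψcont.pow 2).add (hψ'cont.pow 2)
  have hf0 : ∀ r ∈ Ioi (0:ℝ), 0 ≤ f r := fun r _ => by positivity
  have hfint : IntegrableOn f (Ioi 0) := hint
  -- integrability of ψ² and 2ψψ'
  have hsq_int : IntegrableOn (fun r => ψ r^2) (Ioi 0) := by
    apply Integrable.mono' hfint ((hψcont.pow 2).aestronglyMeasurable measurableSet_Ioi)
    filter_upwards [ae_restrict_mem measurableSet_Ioi] with x _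
    rw [Real.norm_eq_abs, abs_of_nonneg (sq_nonneg _)]
    simp only [hfdef, Pi.pow_apply]
    nlinarith [sq_nonneg (ψ' x)]
  have hcross_int : IntegrableOn (fun r => 2 * ψ r * ψ' r) (Ioi 0) := by
    apply Integrable.mono' hfint
      (((continuousOn_const.mul hψcont).mul hψ'cont).aestronglyMeasurable measurableSet_Ioi)
    filter_upwards [ae_restrict_mem measurableSet_Ioi] with x _
    rw [Real.norm_eq_abs]
    simp only [hfdef, Pi.mul_apply]
    rw [abs_le]
    constructor
    · nlinarith [sq_nonneg (ψ x + ψ' x)]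
    · nlinarith [sq_nonneg (ψ x - ψ' x)]
  -- ψ tends to 0 at infinity
  have hFTC : ∀ r, 1 ≤ r → ψ r^2 = ψ 1^2 + ∫ t in (1:ℝ)..r, 2 * ψ t * ψ' t := by
    intro r hr1
    have hIc : IntervalIntegrable (fun t => 2 * ψ t * ψ' t) volume 1 r := by
      rw [intervalIntegrable_iff_integrableOn_Ioc_of_le hr1]
      exact hcross_int.mono_set (fun x hx => lt_trans zero_lt_one hx.1)
    have hder : ∀ t ∈ uIcc (1:ℝ) r, HasDerivAt (fun s => ψ s^2) (2 * ψ t * ψ' t) t := by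
      intro t ht
      rw [uIcc_of_le hr1] at ht
      have ht0 : t ∈ Ioi (0:ℝ) := lt_of_lt_of_le zero_lt_one ht.1
      have := (hd1 t ht0).pow 2
      refine this.congr_deriv ?_
      push_cast; ring
    have := intervalIntegral.integral_eq_sub_of_hasDerivAt hder hIc
    linarith [this]
  have hIt : Tendsto (fun r => ∫ t in (1:ℝ)..r, 2 * ψ t * ψ' t) atTop
      (𝓝 (∫ t in Ioi (1:ℝ), 2 * ψ t * ψ' t)) :=
    intervalIntegral_tendsto_integral_Ioi 1
      (hcross_int.mono_set (fun x hx => mem_Ioi.mpr (lt_trans zero_lt_one (mem_Ioi.mp hx)))) tendsto_id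
  have hsq_tendsto : Tendsto (fun r => ψ r^2) atTop
      (𝓝 (ψ 1^2 + ∫ t in Ioi (1:ℝ), 2 * ψ t * ψ' t)) := by
    apply (tendsto_const_nhds.add hIt).congr'
    filter_upwards [eventually_ge_atTop (1:ℝ)] with r hr using (hFTC r hr).symm
  have hS0 : 0 ≤ ψ 1^2 + ∫ t in Ioi (1:ℝ), 2 * ψ t * ψ' t :=
    ge_of_tendsto hsq_tendsto (Eventually.of_forall fun r => sq_nonneg _)
  have hSeq0 : ψ 1^2 + (∫ t in Ioi (1:ℝ), 2 * ψ t * ψ' t) = 0 := by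
    by_contra hne
    have hpos : 0 < ψ 1^2 + ∫ t in Ioi (1:ℝ), 2 * ψ t * ψ' t := lt_of_le_of_ne hS0 (Ne.symm hne)
    have hev : ∀ᶠ r in atTop, (ψ 1^2 + ∫ t in Ioi (1:ℝ), 2 * ψ t * ψ' t)/2 < ψ r^2 :=
      hsq_tendsto.eventually_const_lt (by linarith)
    obtain ⟨T, hT⟩ := eventually_atTop.mp hev
    have hconst : IntegrableOn
        (fun _ : ℝ => (ψ 1^2 + ∫ t in Ioi (1:ℝ), 2 * ψ t * ψ' t)/2) (Ioi (max T 1)) := by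
      apply Integrable.mono'
        (hsq_int.mono_set (fun x hx => lt_trans (lt_of_lt_of_le zero_lt_one (le_max_right T 1)) hx))
        aestronglyMeasurable_const
      filter_upwards [ae_restrict_mem measurableSet_Ioi] with x hx
      rw [Real.norm_eq_abs, abs_of_nonneg (by linarith)]
      exact le_of_lt (hT x (le_trans (le_max_left T 1) (le_of_lt hx)))
    rw [integrableOn_const_iff] at hconst
    rcases hconst with h | h
    · rw [enorm_eq_zero] at h; linarith
    · rw [Real.volume_Ioi] at h
      exact absurd h (by simp)
  have hψlim : Tendsto ψ atTop (𝓝 (0:ℝ)) := by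
    rw [hSeq0] at hsq_tendsto
    have habs : Tendsto (fun r => |ψ r|) atTop (𝓝 0) := by
      have h := hsq_tendsto.sqrt
      simp only [Real.sqrt_zero] at h
      apply h.congr
      intro r
      rw [Real.sqrt_sq_eq_abs]
    apply tendsto_of_tendsto_of_tendsto_of_le_of_le (by simpa using habs.neg) habs
    · intro r; exact neg_abs_le _
    · intro r; exact le_abs_self _
  -- exponential decay bound
  set M : ℝ := |ψ ((m:ℝ)+5)| * Real.exp ((m:ℝ)+5) with hMdef
  have hM0 : 0 ≤ M := by positivity
  have hMR : M * Real.exp (-((m:ℝ)+5)) = |ψ ((m:ℝ)+5)| := by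
    rw [hMdef, mul_assoc, ← Real.exp_add, add_neg_cancel, Real.exp_zero, mul_one]
  have hup := psi_le_exp (((j:ℝ)+2)*((j:ℝ)+(m:ℝ)+3)) hL0 m ψ ψ' hd1 hd2' hψlim M hM0
    (by rw [hMR]; exact le_abs_self _)
  have hdown := psi_le_exp (((j:ℝ)+2)*((j:ℝ)+(m:ℝ)+3)) hL0 m (fun r => -ψ r) (fun r => -ψ' r)
    (fun r hr => (hd1 r hr).neg)
    (fun r hr => by
      have h := (hd2' r hr).neg
      exact h.congr_deriv (by ring))
    (by simpa using hψlim.neg) M hM0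
    (by show -ψ ((m:ℝ)+5) ≤ _; rw [hMR]; exact neg_le_abs _)
  have hexp : ∀ r, (m:ℝ)+5 ≤ r → |ψ r| ≤ M * Real.exp (-r) := by
    intro r hr
    rw [abs_le]
    constructor
    · have := hdown r hr; simp only [neg_le] at this ⊢; linarith
    · exact hup r hr
  -- define B and its monotonicity
  set B : ℝ → ℝ := fun s => s^(m+2) * ψ s * ψ' s - (((j:ℝ)+2) * s^(m+1) - s^(m+3)) * ψ s^2
    with hBdef
  have hBder : ∀ r ∈ Ioi (0:ℝ), HasDerivAt B
      (r^(m+2) * ((ψ' r - (((j:ℝ)+2)/r - r) * ψ r)^2 + (2*(j:ℝ)+2) * ψ r^2)) r :=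
    fun r hr => Bderiv m j ψ ψ' r hr (hd1 r hr) (hd2' r hr)
  have hBcont : ContinuousOn B (Ioi 0) := fun x hx => ((hBder x hx).continuousAt).continuousWithinAt
  have hBmono : MonotoneOn B (Ioi 0) := by
    apply monotoneOn_of_deriv_nonneg (convex_Ioi 0) hBcont
    · intro x hx
      rw [interior_Ioi] at hx
      exact ((hBder x hx).differentiableAt).differentiableWithinAt
    · intro x hx
      rw [interior_Ioi] at hx
      rw [(hBder x hx).deriv]
      have hx0 : (0:ℝ) < x := hx
      have h1 : (0:ℝ) ≤ x^(m+2) := by positivity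
      apply mul_nonneg h1
      have h2 : (0:ℝ) ≤ (2*(j:ℝ)+2) * ψ x^2 := by positivity
      nlinarith [sq_nonneg (ψ' x - (((j:ℝ)+2)/x - x) * ψ x)]
  -- B is nonpositive
  have hBle : ∀ s ∈ Ioi (0:ℝ), B s ≤ 0 := by
    intro s hs
    by_contra hpos
    push_neg at hpos
    set G : ℝ → ℝ := fun r => M * (r^(m+2) * Real.exp (-r))
      + (M*M) * (((((j:ℝ)+2) * (r^(m+1) * Real.exp (-r)) + r^(m+3) * Real.exp (-r))) * Real.exp (-r))
      with hGdef
    have hGlim : Tendsto G atTop (𝓝 0) := by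
      have t1 := tendsto_pow_mul_exp_neg_atTop_nhds_zero (m+2)
      have t2 := tendsto_pow_mul_exp_neg_atTop_nhds_zero (m+1)
      have t3 := tendsto_pow_mul_exp_neg_atTop_nhds_zero (m+3)
      have te : Tendsto (fun r : ℝ => Real.exp (-r)) atTop (𝓝 0) := tendsto_exp_neg_atTop_nhds_zero
      have h := ((t1.const_mul M).add ((((t2.const_mul ((j:ℝ)+2)).add t3).mul te).const_mul (M*M)))
      simpa using h
    obtain ⟨T1, hT1⟩ := eventually_atTop.mp (hGlim.eventually_lt_const hpos)
    set T2 : ℝ := max (max T1 ((m:ℝ)+5)) (max s 1) with hT2def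
    have hT2pos : 0 < T2 := lt_of_lt_of_le zero_lt_one (le_trans (le_max_right s 1) (le_max_right _ _))
    obtain ⟨t, htT2, htsm⟩ := exists_small_at_top f hfint hfc hf0 1 T2 one_pos hT2pos
    have ht1 : (1:ℝ) ≤ t := le_trans (le_trans (le_max_right s 1) (le_max_right _ _)) (le_of_lt htT2)
    have htR : (m:ℝ)+5 ≤ t := le_trans (le_trans (le_max_right T1 _) (le_max_left _ _)) (le_of_lt htT2)
    have htT1 : T1 ≤ t := le_trans (le_trans (le_max_left T1 _) (le_max_left _ _)) (le_of_lt htT2)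
    have hts : s ≤ t := le_trans (le_trans (le_max_left s 1) (le_max_right _ _)) (le_of_lt htT2)
    have ht0 : (0:ℝ) < t := by linarith
    have hft : t * f t < 1 := htsm
    have hψ't : ψ' t^2 ≤ 1 := by
      simp only [hfdef] at hft
      nlinarith [sq_nonneg (ψ t), sq_nonneg (ψ' t)]
    have hψ'abs : |ψ' t| ≤ 1 := (sq_le_one_iff_abs_le_one _).mp hψ't
    have hψt : |ψ t| ≤ M * Real.exp (-t) := hexp t htR
    have hpt2 : (0:ℝ) ≤ t^(m+2) := by positivity
    have c1 : t^(m+2) * ψ t * ψ' t ≤ M * (t^(m+2) * Real.exp (-t)) := by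
      have hle : t^(m+2) * ψ t * ψ' t ≤ |t^(m+2) * ψ t * ψ' t| := le_abs_self _
      have habs : |t^(m+2) * ψ t * ψ' t| = t^(m+2) * |ψ t| * |ψ' t| := by
        rw [abs_mul, abs_mul, abs_of_nonneg hpt2]
      have hstep : t^(m+2) * |ψ t| * |ψ' t| ≤ (t^(m+2) * (M * Real.exp (-t))) * 1 :=
        mul_le_mul (mul_le_mul_of_nonneg_left hψt hpt2) hψ'abs (abs_nonneg _) (by positivity)
      calc t^(m+2) * ψ t * ψ' t ≤ t^(m+2) * |ψ t| * |ψ' t| := by rw [← habs]; exact hle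
        _ ≤ (t^(m+2) * (M * Real.exp (-t))) * 1 := hstep
        _ = M * (t^(m+2) * Real.exp (-t)) := by ring
    have c2 : -((((j:ℝ)+2) * t^(m+1) - t^(m+3)) * ψ t^2)
        ≤ (M*M) * (((((j:ℝ)+2) * (t^(m+1) * Real.exp (-t)) + t^(m+3) * Real.exp (-t))) * Real.exp (-t)) := by
      have hψsq : ψ t^2 ≤ (M * Real.exp (-t))^2 := by
        calc ψ t^2 = |ψ t|^2 := (sq_abs _).symm
          _ ≤ (M * Real.exp (-t))^2 := pow_le_pow_left₀ (abs_nonneg _) hψt 2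
      have hC1 : (0:ℝ) ≤ ((j:ℝ)+2) * t^(m+1) := by positivity
      have hC2 : (0:ℝ) ≤ t^(m+3) := by positivity
      have l1 : (0:ℝ) ≤ (((j:ℝ)+2) * t^(m+1)) * ψ t^2 := mul_nonneg hC1 (sq_nonneg _)
      have l2 : t^(m+3) * ψ t^2 ≤ t^(m+3) * (M * Real.exp (-t))^2 :=
        mul_le_mul_of_nonneg_left hψsq hC2
      have l3 : (0:ℝ) ≤ (((j:ℝ)+2) * t^(m+1)) * (M * Real.exp (-t))^2 :=
        mul_nonneg hC1 (sq_nonneg _)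
      nlinarith [l1, l2, l3]
    have hBtG : B t ≤ G t := by
      simp only [hBdef, hGdef]
      linarith [c1, c2]
    have hmem : t ∈ Ioi (0:ℝ) := ht0
    have hBst : B s ≤ B t := hBmono hs hmem hts
    have hGlt : G t < B s := hT1 t htT1
    linarith
  -- B is nonnegative
  have hBge : ∀ s ∈ Ioi (0:ℝ), 0 ≤ B s := by
    intro s hs
    by_contra hneg
    push_neg at hneg
    have hs0 : (0:ℝ) < s := hs
    set ε : ℝ := min 1 ((-(B s))/(2*((j:ℝ)+5))) with hεdef
    have hε0 : 0 < ε := lt_min one_pos (div_pos (by linarith) (by positivity))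
    have hTpos : 0 < min s 1 := lt_min hs0 one_pos
    obtain ⟨a, ha0, haT, hasm⟩ := exists_small_near_zero f hfint hfc hf0 ε (min s 1) hε0 hTpos
    have ha1 : a ≤ 1 := le_of_lt (lt_of_lt_of_le haT (min_le_right s 1))
    have has : a < s := lt_of_lt_of_le haT (min_le_left s 1)
    have h0' : a * ψ a^2 + a * ψ' a^2 < ε := by
      have : a * (ψ a^2 + ψ' a^2) < ε := hasm
      linarith [mul_add a (ψ a^2) (ψ' a^2) ▸ this]
    -- prepared product facts
    have hpm : (0:ℝ) ≤ a^m := pow_nonneg ha0.le m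
    have hpe : a^m ≤ 1 := pow_le_one₀ ha0.le ha1
    have haX : a * ψ a^2 ≤ ε := by nlinarith [mul_nonneg ha0.le (sq_nonneg (ψ' a))]
    have hXYl : -ε ≤ 2*(a * (ψ a * ψ' a)) := by
      nlinarith [mul_nonneg ha0.le (sq_nonneg (ψ a + ψ' a))]
    have hq1 : a^m * a ≤ 1 := mul_le_one₀ hpe ha0.le ha1
    have hqa0 : 0 ≤ a^m * a := mul_nonneg hpm ha0.le
    have p1 : 0 ≤ (a^m * a) * (2*(a * (ψ a * ψ' a)) + ε) :=
      mul_nonneg hqa0 (by linarith)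
    have p2 : (a^m * a) * ε ≤ ε := by nlinarith
    have p3 : a^m * (a * ψ a^2) ≤ ε := by
      nlinarith [mul_nonneg ha0.le (sq_nonneg (ψ a))]
    have hj0 : (0:ℝ) ≤ (j:ℝ) := Nat.cast_nonneg j
    have p4 : 0 ≤ (a^m * a * a * a) * ψ a^2 :=
      mul_nonneg (by positivity) (sq_nonneg _)
    have pj : 0 ≤ (j:ℝ) * (ε - a^m * (a * ψ a^2)) := mul_nonneg hj0 (by linarith)
    have e1 : a^(m+1) = a^m * a := pow_succ a m
    have e2 : a^(m+2) = a^m * a * a := by rw [pow_succ, pow_succ]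
    have e3 : a^(m+3) = a^m * a * a * a := by rw [pow_succ, pow_succ, pow_succ]
    have key : -(((j:ℝ)+4) * ε) ≤ B a := by
      simp only [hBdef]
      rw [e1, e2, e3]
      nlinarith [p1, p2, p3, p4, pj, hε0.le]
    have hεB : ε * (2*((j:ℝ)+5)) ≤ -(B s) := by
      have hmin : ε ≤ (-(B s))/(2*((j:ℝ)+5)) := min_le_right _ _
      rw [le_div_iff₀ (by positivity)] at hmin
      exact hmin
    have hkey2 : B s < -(((j:ℝ)+4) * ε) := by nlinarith
    have hmem : a ∈ Ioi (0:ℝ) := ha0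
    have hBas : B a ≤ B s := hBmono hmem hs (le_of_lt has)
    linarith
  -- conclusion
  intro r hr
  have hB0 : ∀ x ∈ Ioi (0:ℝ), B x = 0 := fun x hx => le_antisymm (hBle x hx) (hBge x hx)
  have hev : B =ᶠ[𝓝 r] fun _ => (0:ℝ) :=
    eventually_of_mem (isOpen_Ioi.mem_nhds hr) (fun x hx => hB0 x hx)
  have h0 : HasDerivAt B 0 r := (hasDerivAt_const r (0:ℝ)).congr_of_eventuallyEq hev
  have huniq : (0:ℝ) = r^(m+2) * ((ψ' r - (((j:ℝ)+2)/r - r) * ψ r)^2 + (2*(j:ℝ)+2) * ψ r^2) :=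
    h0.unique (hBder r hr)
  have hr0 : (0:ℝ) < r := hr
  have hrne : r^(m+2) ≠ 0 := by positivity
  have hzero : (ψ' r - (((j:ℝ)+2)/r - r) * ψ r)^2 + (2*(j:ℝ)+2) * ψ r^2 = 0 :=
    (mul_eq_zero.mp huniq.symm).resolve_left hrne
  have hj0 : (0:ℝ) ≤ (j:ℝ) := Nat.cast_nonneg j
  have hsq0 : ψ r^2 = 0 := by
    nlinarith [sq_nonneg (ψ' r - (((j:ℝ)+2)/r - r) * ψ r), sq_nonneg (ψ r)]
  exact pow_eq_zero_iff two_ne_zero |>.mp hsq0
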